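/- Let X be a metric space, π : ℝ≥0 × X → X a continuous semiflow, γ̃ : ℝ → X an entire trajectory, and γ its discretization to ℤ. Assume the semiflow has the uniform integral-continuity property: for every ε > 0 there exists δ > 0 such that ρ(x₁,x₂) < δ implies ρ(π(t,x₁), π(t,x₂)) < ε for all t ∈ [0,1]. If γ : ℤ → X is Bohr almost periodic as a function on ℤ (for every δ > 0 the set of integer δ-almost periods is relatively dense in ℤ), then γ̃ is Bohr almost periodic as a function on ℝ, i.e., for every ε > 0 there is a relatively dense set P ⊆ ℝ of ε-almost periods of γ̃. -/
import Mathlib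


/-- If the discretization of an entire trajectory of a semiflow (with the uniform
integral-continuity property) is Bohr almost periodic on `ℤ`, then the trajectory
itself is Bohr almost periodic on `ℝ`. -/
theorem stmt_3 {X : Type*} [MetricSpace X]
    (π : NNReal → X → X)
    (hcont : Continuous fun p : NNReal × X => π p.1 p.2)
    (hπ0 : ∀ x : X, π 0 x = x)
    (hπadd : ∀ (s t : NNReal) (x : X), π s (π t x) = π (s + t) x)
    (hic : ∀ ε > (0 : ℝ), ∃ δ > (0 : ℝ), ∀ x₁ x₂ : X, dist x₁ x₂ < δ →
      ∀ t : NNReal, t ≤ 1 → dist (π t x₁) (π t x₂) < ε)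
    (γt : ℝ → X)
    (hγ : ∀ (t : NNReal) (τ : ℝ), γt ((t : ℝ) + τ) = π t (γt τ))
    (hapZ : ∀ δ > (0 : ℝ), ∃ L : ℕ, 0 < L ∧ ∀ a : ℤ,
      ∃ τ ∈ Set.Icc a (a + (L : ℤ)), ∀ n : ℤ,
        dist (γt ((n : ℝ) + (τ : ℝ))) (γt (n : ℝ)) < δ) :
    ∀ ε > (0 : ℝ), ∃ L > (0 : ℝ), ∀ a : ℝ,
      ∃ τ ∈ Set.Icc a (a + L), ∀ t : ℝ, dist (γt (t + τ)) (γt t) < ε := by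
  intro ε hε
  obtain ⟨δ, hδ, hδic⟩ := hic ε hε
  obtain ⟨L, hL, hLap⟩ := hapZ δ hδ
  refine ⟨(L : ℝ) + 1, by positivity, fun a => ?_⟩
  obtain ⟨τ, hτmem, hτap⟩ := hLap ⌈a⌉
  refine ⟨(τ : ℝ), ⟨?_, ?_⟩, ?_⟩
  · calc a ≤ (⌈a⌉ : ℝ) := Int.le_ceil a
    _ ≤ (τ : ℝ) := by exact_mod_cast hτmem.1
  · calc (τ : ℝ) ≤ ((⌈a⌉ + (L : ℤ)) : ℤ) := by exact_mod_cast hτmem.2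
    _ = (⌈a⌉ : ℝ) + L := by push_cast; ring
    _ ≤ (a + 1) + L := by linarith [Int.ceil_le_floor_add_one a, Int.floor_le a,
        (Int.ceil_lt_add_one a).le]
    _ = a + ((L : ℝ) + 1) := by ring
  · intro t
    set s : NNReal := ⟨Int.fract t, Int.fract_nonneg t⟩ with hs
    have hs1 : s ≤ 1 := by
      have : (s : ℝ) ≤ 1 := (Int.fract_lt_one t).le
      exact_mod_cast this
    have h1 : γt t = π s (γt (⌊t⌋ : ℝ)) := by
      rw [← hγ s (⌊t⌋ : ℝ)]
      congr 1
      symm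
      show Int.fract t + (⌊t⌋ : ℝ) = t
      rw [add_comm]; exact Int.floor_add_fract t
    have h2 : γt (t + τ) = π s (γt ((⌊t⌋ : ℝ) + τ)) := by
      rw [← hγ s ((⌊t⌋ : ℝ) + τ)]
      congr 1
      symm
      show Int.fract t + ((⌊t⌋ : ℝ) + τ) = t + τ
      rw [← add_assoc, add_comm (Int.fract t), Int.floor_add_fract]
    rw [h1, h2]
    have := hτap ⌊t⌋
    exact hδic _ _ (by exact_mod_cast this) s hs1
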